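/- Cost preservation under portal routing lift: let 𝒫 be the portal routed graph of (G, T, P) with lengths ℓ^𝒫 and gradients g^𝒫 defined as in the portal routing construction, and let Π_{𝒫→G} be the associated embedding. For any circulation c in 𝒫, the lifted flow Π_{𝒫→G}(c) is a circulation in G with ⟨g^𝒫, c⟩ = ⟨g, Π_{𝒫→G}(c)⟩ and ‖L Π_{𝒫→G}(c)‖₁ ≤ ‖L^𝒫 c‖₁. -/
import Mathlib


open Matrix BigOperators

/-- Cost preservation under the portal routing lift.  The portal routed graph `𝒫` has
edges `Ep` with endpoints `src, tgt` among the portals `P`, lengths `ℓp` and gradients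
`gp`; `Emb` is the embedding matrix whose column at `ep` is the (signed indicator of the)
embedding path in `G` from `inc (src ep)` to `inc (tgt ep)` (hypothesis `hpath`).  The
portal-routing construction guarantees a potential `φ` on portals with
`⟨g, Emb 1_{ep}⟩ = gp(ep) + φ(tgt ep) − φ(src ep)` (tree-path edges have gradient 0 and the
portal routed edge carries the full fundamental-cycle gradient), and the embedding path
lengths are bounded by the 𝒫-lengths.  Then for every circulation `c` in `𝒫`, the lift
`Emb c` is a circulation in `G` with `⟨gp, c⟩ = ⟨g, Emb c⟩` and `‖L Emb c‖₁ ≤ ‖L𝒫 c‖₁`. -/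
theorem stmt_16 {V P Eg Ep : Type*} [Fintype V] [Fintype P] [Fintype Eg] [Fintype Ep]
    [DecidableEq V] [DecidableEq P]
    (Bg : Matrix Eg V ℝ) (ℓ : Eg → ℝ) (hℓ : ∀ e, 0 < ℓ e) (g : Eg → ℝ)
    (src tgt : Ep → P) (inc : P → V) (hinj : Function.Injective inc)
    (ℓp gp : Ep → ℝ) (Emb : Matrix Eg Ep ℝ) (φ : P → ℝ)
    (hpath : ∀ ep, Bgᵀ.mulVec (fun eg => Emb eg ep)
      = fun w => (if w = inc (tgt ep) then (1 : ℝ) else 0)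
          - (if w = inc (src ep) then 1 else 0))
    (hgrad : ∀ ep, (∑ eg, g eg * Emb eg ep) = gp ep + φ (tgt ep) - φ (src ep))
    (hlen : ∀ ep, (∑ eg, ℓ eg * |Emb eg ep|) ≤ ℓp ep)
    (c : Ep → ℝ)
    (hcirc : ∀ q : P,
      (∑ ep, if tgt ep = q then c ep else 0) - (∑ ep, if src ep = q then c ep else 0) = 0) :
    Bgᵀ.mulVec (Emb.mulVec c) = 0 ∧
    (∑ ep, gp ep * c ep) = (∑ eg, g eg * Emb.mulVec c eg) ∧
    (∑ eg, ℓ eg * |Emb.mulVec c eg|) ≤ ∑ ep, ℓp ep * |c ep| := by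
  have hswap : ∀ w, Bgᵀ.mulVec (Emb.mulVec c) w
      = ∑ ep, (Bgᵀ.mulVec (fun eg => Emb eg ep) w) * c ep := by
    intro w
    simp only [mulVec, dotProduct, Finset.mul_sum, Finset.sum_mul]
    rw [Finset.sum_comm]
    congr 1; ext ep; congr 1; ext eg; ring
  refine ⟨?_, ?_, ?_⟩
  · funext w
    rw [hswap w]
    simp only [hpath]
    by_cases hw : ∃ q, w = inc q
    · obtain ⟨q, rfl⟩ := hw
      have h1 : ∀ ep, ((if inc q = inc (tgt ep) then (1:ℝ) else 0)
          - (if inc q = inc (src ep) then 1 else 0)) * c ep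
          = (if tgt ep = q then c ep else 0) - (if src ep = q then c ep else 0) := by
        intro ep
        have e1 : (inc q = inc (tgt ep)) = (tgt ep = q) := by
          simp [hinj.eq_iff, eq_comm]
        have e2 : (inc q = inc (src ep)) = (src ep = q) := by
          simp [hinj.eq_iff, eq_comm]
        simp only [e1, e2]
        by_cases h : tgt ep = q <;> by_cases h' : src ep = q <;> simp [h, h']
      simp only [h1, Finset.sum_sub_distrib]
      have := hcirc q
      simpa using this
    · push_neg at hw
      have : ∀ ep, ((if w = inc (tgt ep) then (1:ℝ) else 0)
          - (if w = inc (src ep) then 1 else 0)) * c ep = 0 := by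
        intro ep; simp [hw (tgt ep), hw (src ep)]
      simp [this]
  · have h1 : (∑ eg, g eg * Emb.mulVec c eg)
        = ∑ ep, (∑ eg, g eg * Emb eg ep) * c ep := by
      simp only [mulVec, dotProduct, Finset.mul_sum]
      rw [Finset.sum_comm]
      congr 1; ext ep; rw [Finset.sum_mul]; congr 1; ext eg; ring
    rw [h1]
    simp only [hgrad]
    have key : ∀ f : Ep → P, (∑ ep, φ (f ep) * c ep)
        = ∑ q, φ q * (∑ ep, if f ep = q then c ep else 0) := by
      intro f
      simp only [Finset.mul_sum, mul_ite, mul_zero]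
      rw [Finset.sum_comm]
      congr 1; ext ep
      simp [Finset.sum_ite_eq]
    have expand : ∑ ep, (gp ep + φ (tgt ep) - φ (src ep)) * c ep
        = (∑ ep, gp ep * c ep) + (∑ ep, φ (tgt ep) * c ep)
          - (∑ ep, φ (src ep) * c ep) := by
      simp only [add_mul, sub_mul, Finset.sum_sub_distrib, Finset.sum_add_distrib]
    rw [expand, key tgt, key src]
    have h0 : (∑ q, φ q * (∑ ep, if tgt ep = q then c ep else 0))
        - (∑ q, φ q * (∑ ep, if src ep = q then c ep else 0)) = 0 := by
      rw [← Finset.sum_sub_distrib]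
      exact Finset.sum_eq_zero fun q _ => by rw [← mul_sub, hcirc q, mul_zero]
    linarith
  · calc (∑ eg, ℓ eg * |Emb.mulVec c eg|)
        ≤ ∑ eg, ℓ eg * ∑ ep, |Emb eg ep| * |c ep| := by
          apply Finset.sum_le_sum
          intro eg _
          apply mul_le_mul_of_nonneg_left _ (hℓ eg).le
          simp only [mulVec, dotProduct]
          calc |∑ ep, Emb eg ep * c ep| ≤ ∑ ep, |Emb eg ep * c ep| :=
                Finset.abs_sum_le_sum_abs _ _
            _ = ∑ ep, |Emb eg ep| * |c ep| := by simp [abs_mul]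
      _ = ∑ ep, (∑ eg, ℓ eg * |Emb eg ep|) * |c ep| := by
          simp only [Finset.mul_sum]
          rw [Finset.sum_comm]
          congr 1; ext ep; rw [Finset.sum_mul]; congr 1; ext eg; ring
      _ ≤ ∑ ep, ℓp ep * |c ep| := by
          apply Finset.sum_le_sum
          intro ep _
          exact mul_le_mul_of_nonneg_right (hlen ep) (abs_nonneg _)
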